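/- arXiv:1405.0707 — 2 statements merged into one kernel-verified Lean document; each statement's English description precedes it below -/
import Mathlib

section
/- Collinearity of shifted block FOM residuals: assume the block Arnoldi relation (A - τI)V_m = V_m(H_m - τI) + V_{m+1} H_{m+1,m} E_m^T holds, the previous residual satisfies R⁰ = V₁·R̂ with V₁ the first block of V_m, and Z solves (H_m - τI)Z = E₁·R̂. Then the new residual R = R⁰ - (A - τI)·V_m·Z equals -V_{m+1}·(H_{m+1,m}·E_m^T·Z); in particular R lies in the column span of V_{m+1}. -/
/-- Collinearity of shifted block FOM residuals: if the shifted block Arnoldi relation holds,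
`R0 = V₁·Rhat` with `V₁ = V_m·E₁`, and `Z` solves `(H_m - τI)Z = E₁·Rhat`, then the new residual
`R = R0 - (A - τI)·V_m·Z` equals `-V_{m+1}·(H_{m+1,m}·E_mᵀ·Z)`; in particular every column of
`R` lies in the column span of `V_{m+1}`. -/
theorem stmt4 (n m p : ℕ) (A : Matrix (Fin n) (Fin n) ℂ) (τ : ℂ)
    (Vm : Matrix (Fin n) (Fin (m * p)) ℂ) (Vnext : Matrix (Fin n) (Fin p) ℂ)
    (Hm : Matrix (Fin (m * p)) (Fin (m * p)) ℂ) (Hnm : Matrix (Fin p) (Fin p) ℂ)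
    (E₁ Em : Matrix (Fin (m * p)) (Fin p) ℂ)
    (hE₁ : E₁ = Matrix.of fun (i : Fin (m * p)) (j : Fin p) => if (i : ℕ) = (j : ℕ) then (1 : ℂ) else 0)
    (hEm : Em = Matrix.of fun (i : Fin (m * p)) (j : Fin p) => if (i : ℕ) = (m - 1) * p + (j : ℕ) then (1 : ℂ) else 0)
    (Rhat : Matrix (Fin p) (Fin p) ℂ) (R0 : Matrix (Fin n) (Fin p) ℂ) (Z : Matrix (Fin (m * p)) (Fin p) ℂ)
    (hArnoldi : (A - τ • (1 : Matrix (Fin n) (Fin n) ℂ)) * Vm =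
      Vm * (Hm - τ • (1 : Matrix (Fin (m * p)) (Fin (m * p)) ℂ)) + Vnext * Hnm * Em.transpose)
    (hunit : IsUnit (Hm - τ • (1 : Matrix (Fin (m * p)) (Fin (m * p)) ℂ)))
    (hR0 : R0 = (Vm * E₁) * Rhat)
    (hZ : (Hm - τ • (1 : Matrix (Fin (m * p)) (Fin (m * p)) ℂ)) * Z = E₁ * Rhat) :
    R0 - (A - τ • (1 : Matrix (Fin n) (Fin n) ℂ)) * (Vm * Z) =
        -(Vnext * (Hnm * (Em.transpose * Z))) ∧
      ∀ j : Fin p,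
        (fun r => (R0 - (A - τ • (1 : Matrix (Fin n) (Fin n) ℂ)) * (Vm * Z)) r j) ∈
          Submodule.span ℂ (Set.range fun k : Fin p => fun r => Vnext r k) := by
  have key : R0 - (A - τ • (1 : Matrix (Fin n) (Fin n) ℂ)) * (Vm * Z) =
      -(Vnext * (Hnm * (Em.transpose * Z))) := by
    rw [hR0, ← Matrix.mul_assoc, hArnoldi]
    simp only [Matrix.add_mul, Matrix.mul_assoc, hZ]
    abel
  refine ⟨key, fun j => ?_⟩
  rw [key]
  have : (fun r => (-(Vnext * (Hnm * (Em.transpose * Z)))) r j) =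
      ∑ k : Fin p, (-(Hnm * (Em.transpose * Z)) k j) • (fun r => Vnext r k) := by
    funext r
    simp [Matrix.mul_apply, Finset.sum_apply, mul_comm]
  rw [this]
  exact Submodule.sum_mem _ fun k _ => Submodule.smul_mem _ _
    (Submodule.subset_span ⟨k, rfl⟩)
end

section
/- Residual expansion in Ritz residuals (Theorem 4.2): suppose A⁻¹V_m = V_m H_m + V_{m+1}H_{m+1,m}E_m^T and H_m = PΛP^{-1} with Λ = diag(μ₁,…,μ_{mp}) and P = [y₁,…,y_{mp}]. Let r_j = A⁻¹V_m y_j - μ_j V_m y_j be the Ritz residuals, and let R = τ·V_{m+1}H_{m+1,m}E_m^T(I - τH_m)^{-1}E₁R̂ be the preconditioned shifted block FOM residual, where I - τH_m is invertible. Then R = τ·[r₁, …, r_{mp}]·(P(I - τΛ))^{-1}·E₁R̂. -/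
/-- Residual expansion in Ritz residuals (Theorem 4.2): if
`A⁻¹V_m = V_m H_m + V_{m+1}H_{m+1,m}E_mᵀ`, `H_m = PΛP⁻¹` with `Λ` diagonal (so `H_mP = PΛ`),
the matrix of Ritz residuals is `Rmat = A⁻¹V_mP - V_mPΛ` (whose columns are the `r_j`), and
`R = τ·V_{m+1}H_{m+1,m}E_mᵀ(I - τH_m)⁻¹E₁Rhat`, then `R = τ·Rmat·(P(I - τΛ))⁻¹·E₁Rhat`. -/
theorem stmt12 (n m p : ℕ) (A : Matrix (Fin n) (Fin n) ℂ) (hA : IsUnit A) (τ : ℂ)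
    (Vm : Matrix (Fin n) (Fin (m * p)) ℂ) (Vnext : Matrix (Fin n) (Fin p) ℂ)
    (Hm P : Matrix (Fin (m * p)) (Fin (m * p)) ℂ) (Hnm : Matrix (Fin p) (Fin p) ℂ)
    (E₁ Em : Matrix (Fin (m * p)) (Fin p) ℂ)
    (Rhat : Matrix (Fin p) (Fin p) ℂ)
    (μ : Fin (m * p) → ℂ) (Λ : Matrix (Fin (m * p)) (Fin (m * p)) ℂ)
    (hΛ : Λ = Matrix.diagonal μ)
    (hP : IsUnit P)
    (hdiag : Hm * P = P * Λ)
    (hArnoldi : A⁻¹ * Vm = Vm * Hm + Vnext * Hnm * Em.transpose)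
    (hHunit : IsUnit ((1 : Matrix (Fin (m * p)) (Fin (m * p)) ℂ) - τ • Hm))
    (hΛunit : IsUnit ((1 : Matrix (Fin (m * p)) (Fin (m * p)) ℂ) - τ • Λ))
    (Rmat : Matrix (Fin n) (Fin (m * p)) ℂ)
    (hRmat : Rmat = A⁻¹ * Vm * P - Vm * P * Λ)
    (R : Matrix (Fin n) (Fin p) ℂ)
    (hR : R = τ • (Vnext * (Hnm * (Em.transpose *
      (((1 : Matrix (Fin (m * p)) (Fin (m * p)) ℂ) - τ • Hm)⁻¹ * (E₁ * Rhat)))))) :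
    R = τ • (Rmat *
      ((P * ((1 : Matrix (Fin (m * p)) (Fin (m * p)) ℂ) - τ • Λ))⁻¹ * (E₁ * Rhat))) := by
  have hPd : IsUnit P.det := (Matrix.isUnit_iff_isUnit_det P).mp hP
  have hXd : IsUnit ((1 : Matrix (Fin (m * p)) (Fin (m * p)) ℂ) - τ • Hm).det :=
    (Matrix.isUnit_iff_isUnit_det _).mp hHunit
  have hYd : IsUnit ((1 : Matrix (Fin (m * p)) (Fin (m * p)) ℂ) - τ • Λ).det :=
    (Matrix.isUnit_iff_isUnit_det _).mp hΛunit
  set X := (1 : Matrix (Fin (m * p)) (Fin (m * p)) ℂ) - τ • Hm with hXdef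
  set Y := (1 : Matrix (Fin (m * p)) (Fin (m * p)) ℂ) - τ • Λ with hYdef
  have hcomm : X * P = P * Y := by
    simp only [hXdef, hYdef, Matrix.sub_mul, Matrix.mul_sub, Matrix.one_mul, Matrix.mul_one,
      Matrix.smul_mul, Matrix.mul_smul, hdiag]
  have hXinv : X⁻¹ = P * Y⁻¹ * P⁻¹ := by
    apply Matrix.inv_eq_right_inv
    calc X * (P * Y⁻¹ * P⁻¹) = (X * P) * Y⁻¹ * P⁻¹ := by noncomm_ring
    _ = P * (Y * Y⁻¹) * P⁻¹ := by rw [hcomm]; noncomm_ring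
    _ = 1 := by rw [Matrix.mul_nonsing_inv _ hYd, Matrix.mul_one, Matrix.mul_nonsing_inv _ hPd]
  have hPYinv : (P * Y)⁻¹ = Y⁻¹ * P⁻¹ := Matrix.mul_inv_rev P Y
  have hRmat2 : Rmat = Vnext * Hnm * Em.transpose * P := by
    rw [hRmat, hArnoldi, Matrix.add_mul, Matrix.mul_assoc Vm Hm P, hdiag,
      ← Matrix.mul_assoc]
    abel
  rw [hR, hRmat2, hPYinv, hXinv]
  congr 1
  simp only [Matrix.mul_assoc]
end
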